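/- Let K be an extremally disconnected compact Hausdorff space and (τ_n) an increasing sequence of continuous functions K → ℕ ∪ {∞}. Then the supremum τ of (τ_n) in the lattice of continuous extended-real-valued functions on K also has range contained in ℕ ∪ {∞}. -/

import Mathlib

open Set

theorem stmt_12 {K : Type*} [TopologicalSpace K] [CompactSpace K] [T2Space K]
    [ExtremallyDisconnected K]
    (τs : ℕ → K → ENNReal) (hτc : ∀ n, Continuous (τs n))
    (hrange : ∀ n ω, τs n ω = ⊤ ∨ ∃ m : ℕ, τs n ω = (m : ENNReal))
    (hmono : ∀ n ω, τs n ω ≤ τs (n + 1) ω)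
    (τ : K → ENNReal) (hτ : Continuous τ)
    (hub : ∀ n ω, τs n ω ≤ τ ω)
    (hlub : ∀ σ : K → ENNReal, Continuous σ → (∀ n ω, τs n ω ≤ σ ω) → ∀ ω, τ ω ≤ σ ω) :
    ∀ ω : K, τ ω = ⊤ ∨ ∃ m : ℕ, τ ω = (m : ENNReal) := by
  classical
  intro ω₀
  by_contra h
  push_neg at h
  obtain ⟨hne, hnat⟩ := h
  set α := τ ω₀ with hα
  set m := ⌊α.toReal⌋₊ with hm
  have htop1 : ((m : ℕ) : ENNReal) ≠ ⊤ := ENNReal.natCast_ne_top m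
  have htop2 : (((m+1 : ℕ)) : ENNReal) ≠ ⊤ := ENNReal.natCast_ne_top (m+1)
  have h1 : (m : ENNReal) < α := by
    have hle : ((m : ℕ) : ENNReal) ≤ α := by
      rw [← ENNReal.ofReal_natCast]
      rw [ENNReal.ofReal_le_iff_le_toReal hne]
      exact_mod_cast Nat.floor_le (ENNReal.toReal_nonneg (a := α))
    exact lt_of_le_of_ne hle (fun hEq => hnat m hEq.symm)
  have h2 : α < ((m+1 : ℕ) : ENNReal) := by
    rw [← ENNReal.toReal_lt_toReal hne htop2]
    have : α.toReal < (m : ℝ) + 1 := Nat.lt_floor_add_one _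
    rw [ENNReal.toReal_natCast]
    exact_mod_cast this
  set U : Set K := τ ⁻¹' (Ioo (m : ENNReal) ((m+1 : ℕ) : ENNReal)) with hU
  have hUopen : IsOpen U := isOpen_Ioo.preimage hτ
  set V : Set K := closure U with hV
  have hVclopen : IsClopen V :=
    ⟨isClosed_closure, ExtremallyDisconnected.open_closure U hUopen⟩
  -- all τs n are ≤ m on V
  have hbound : ∀ n, ∀ ω ∈ V, τs n ω ≤ (m : ENNReal) := by
    intro n ω hω
    have hclosed : IsClosed {x | τs n x ≤ (m : ENNReal)} :=
      isClosed_le (hτc n) continuous_const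
    have hsub : U ⊆ {x | τs n x ≤ (m : ENNReal)} := by
      intro x hx
      have hx' : τs n x < ((m+1 : ℕ) : ENNReal) := lt_of_le_of_lt (hub n x) hx.2
      rcases hrange n x with htop | ⟨k, hk⟩
      · exact absurd (htop ▸ hx') (by simp)
      · rw [hk] at hx'
        simp only [mem_setOf_eq, hk]
        exact_mod_cast Nat.lt_succ_iff.mp (by exact_mod_cast hx')
    exact (hclosed.closure_subset_iff.mpr hsub) hω
  set σ : K → ENNReal := V.piecewise (fun ω => min (τ ω) (m : ENNReal)) τ with hσ
  have hσc : Continuous σ := by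
    apply Continuous.piecewise
    · intro a ha
      rw [hVclopen.frontier_eq] at ha
      exact absurd ha (notMem_empty a)
    · exact hτ.min continuous_const
    · exact hτ
  have hσub : ∀ n ω, τs n ω ≤ σ ω := by
    intro n ω
    by_cases hω : ω ∈ V
    · rw [hσ, Set.piecewise_eq_of_mem _ _ _ hω]
      exact le_min (hub n ω) (hbound n ω hω)
    · rw [hσ, Set.piecewise_eq_of_notMem _ _ _ hω]
      exact hub n ω
  have hω₀U : ω₀ ∈ U := ⟨h1, h2⟩
  have hω₀V : ω₀ ∈ V := subset_closure hω₀U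
  have := hlub σ hσc hσub ω₀
  rw [hσ, Set.piecewise_eq_of_mem _ _ _ hω₀V] at this
  have : α ≤ (m : ENNReal) := le_trans this (min_le_right _ _)
  exact absurd this (not_le.mpr h1)
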